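/- arXiv:1912.04164 — 2 statements merged into one kernel-verified Lean document; each statement's English description precedes it below -/
import Mathlib

section
/- Fix x ∈ ℝ and a function L satisfying the composition rule, and suppose the following ordering property holds: for every t > 0 and y₁ < y₂, every geodesic from (x,0) to (y₁,t) lies weakly below every geodesic from (x,0) to (y₂,t). Then the set M_x = {y ∈ ℝ : there exist two distinct geodesics from (x,0) to (y,1)} is countable. -/
open Set MeasureTheory

/-- Length of a continuous path `γ` on `[s,t]`: infimum over finite partitions of the
sum of `L`-increments. -/
noncomputable def pathLen (L : ℝ → ℝ → ℝ → ℝ → ℝ) (γ : ℝ → ℝ) (s t : ℝ) : ℝ :=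
  sInf {v : ℝ | ∃ (k : ℕ) (p : ℕ → ℝ), 0 < k ∧ p 0 = s ∧ p k = t ∧
    (∀ i < k, p i < p (i + 1)) ∧
    v = ∑ i ∈ Finset.range k, L (γ (p i)) (p i) (γ (p (i + 1))) (p (i + 1))}

/-- The last-passage composition rule: for every intermediate time `r ∈ (s,t)`,
`L(x,s;y,t)` is the (finite, attained-as-lub) supremum of `L(x,s;z,r)+L(z,r;y,t)`. -/
def CompRule (L : ℝ → ℝ → ℝ → ℝ → ℝ) : Prop :=
  ∀ x s y t r : ℝ, s < r → r < t →
    IsLUB {v : ℝ | ∃ z : ℝ, v = L x s z r + L z r y t} (L x s y t)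

/-- `γ` is a geodesic on `[s,t]`: continuous and of maximal length. -/
def IsGeodesic (L : ℝ → ℝ → ℝ → ℝ → ℝ) (γ : ℝ → ℝ) (s t : ℝ) : Prop :=
  ContinuousOn γ (Icc s t) ∧ pathLen L γ s t = L (γ s) s (γ t) t

/-- `γ` is a geodesic from `(x,s)` to `(y,t)`. -/
def InGt (L : ℝ → ℝ → ℝ → ℝ → ℝ) (x s y t : ℝ) (γ : ℝ → ℝ) : Prop :=
  ContinuousOn γ (Icc s t) ∧ γ s = x ∧ γ t = y ∧ pathLen L γ s t = L x s y t

/-- `γ` is a geodesic from `(x,0)` to `(y,1)`. -/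
def InG (L : ℝ → ℝ → ℝ → ℝ → ℝ) (x y : ℝ) (γ : ℝ → ℝ) : Prop :=
  InGt L x 0 y 1 γ

/-- Auxiliary: if two geodesics to the same endpoint strictly differ at some time,
then we can find rationals `q` (a time) and `a` (a level) strictly separating them. -/
lemma exists_rat_sep (L : ℝ → ℝ → ℝ → ℝ → ℝ) (x y : ℝ) (γ γ' : ℝ → ℝ)
    (hγ : InGt L x 0 y 1 γ) (hγ' : InGt L x 0 y 1 γ') (r : ℝ) (hr : r ∈ Icc (0:ℝ) 1)
    (hlt : γ r < γ' r) :
    ∃ q a : ℚ, (q:ℝ) ∈ Icc (0:ℝ) 1 ∧ γ (q:ℝ) < (a:ℝ) ∧ (a:ℝ) < γ' (q:ℝ) := by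
  have hr0 : 0 < r := by
    rcases eq_or_lt_of_le hr.1 with h | h
    · exfalso; rw [← h] at hlt
      rw [hγ.2.1, hγ'.2.1] at hlt; exact lt_irrefl _ hlt
    · exact h
  have hr1 : r < 1 := by
    rcases eq_or_lt_of_le hr.2 with h | h
    · exfalso; rw [h] at hlt
      rw [hγ.2.2.1, hγ'.2.2.1] at hlt; exact lt_irrefl _ hlt
    · exact h
  have hmem : Icc (0:ℝ) 1 ∈ nhds r := Icc_mem_nhds hr0 hr1
  have cγ : ContinuousAt γ r := hγ.1.continuousAt hmem
  have cγ' : ContinuousAt γ' r := hγ'.1.continuousAt hmem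
  set m : ℝ := (γ r + γ' r) / 2 with hm
  have h1 : ∀ᶠ t in nhds r, γ t < m := cγ.eventually_lt_const (by rw [hm]; linarith)
  have h2 : ∀ᶠ t in nhds r, m < γ' t := cγ'.eventually_const_lt (by rw [hm]; linarith)
  have h3 : ∀ᶠ t in nhds r, t ∈ Ioo (0:ℝ) 1 :=
    eventually_mem_nhds_iff.mpr (Ioo_mem_nhds hr0 hr1) |>.mono (fun t ht => mem_of_mem_nhds ht)
  have hE : {t : ℝ | γ t < m ∧ m < γ' t ∧ t ∈ Ioo (0:ℝ) 1} ∈ nhds r := by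
    filter_upwards [h1, h2, h3] with t ht1 ht2 ht3
    exact ⟨ht1, ht2, ht3⟩
  obtain ⟨ε, εpos, hball⟩ := Metric.mem_nhds_iff.mp hE
  obtain ⟨q, hq1, hq2⟩ := exists_rat_btwn (lt_add_of_pos_right r εpos)
  have hqball : (q:ℝ) ∈ Metric.ball r ε := by
    rw [Metric.mem_ball, Real.dist_eq, abs_of_pos (by linarith)]
    linarith
  obtain ⟨hgq, hmq, hqIoo⟩ := hball hqball
  obtain ⟨a, ha1, ha2⟩ := exists_rat_btwn (lt_trans hgq hmq)
  exact ⟨q, a, ⟨le_of_lt hqIoo.1, le_of_lt hqIoo.2⟩, ha1, ha2⟩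

theorem stmt6 (L : ℝ → ℝ → ℝ → ℝ → ℝ) (hL : CompRule L) (x : ℝ)
    (hord : ∀ t : ℝ, 0 < t → ∀ y₁ y₂ : ℝ, y₁ < y₂ → ∀ γ₁ γ₂ : ℝ → ℝ,
      InGt L x 0 y₁ t γ₁ → InGt L x 0 y₂ t γ₂ → ∀ r ∈ Icc (0:ℝ) t, γ₁ r ≤ γ₂ r) :
    Set.Countable {y : ℝ | ∃ γ γ' : ℝ → ℝ,
      InGt L x 0 y 1 γ ∧ InGt L x 0 y 1 γ' ∧ ∃ r ∈ Icc (0:ℝ) 1, γ r ≠ γ' r} := by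
  have key : {y : ℝ | ∃ γ γ' : ℝ → ℝ,
      InGt L x 0 y 1 γ ∧ InGt L x 0 y 1 γ' ∧ ∃ r ∈ Icc (0:ℝ) 1, γ r ≠ γ' r} ⊆
      ⋃ (q : ℚ) (a : ℚ), {y : ℝ | ∃ γ γ' : ℝ → ℝ,
        InGt L x 0 y 1 γ ∧ InGt L x 0 y 1 γ' ∧ (q:ℝ) ∈ Icc (0:ℝ) 1 ∧
        γ (q:ℝ) < (a:ℝ) ∧ (a:ℝ) < γ' (q:ℝ)} := by
    rintro y ⟨γ, γ', hγ, hγ', r, hr, hne⟩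
    rcases lt_or_gt_of_ne hne with h | h
    · obtain ⟨q, a, hq, h1, h2⟩ := exists_rat_sep L x y γ γ' hγ hγ' r hr h
      exact mem_iUnion.mpr ⟨q, mem_iUnion.mpr ⟨a, γ, γ', hγ, hγ', hq, h1, h2⟩⟩
    · obtain ⟨q, a, hq, h1, h2⟩ := exists_rat_sep L x y γ' γ hγ' hγ r hr h
      exact mem_iUnion.mpr ⟨q, mem_iUnion.mpr ⟨a, γ', γ, hγ', hγ, hq, h1, h2⟩⟩
  refine Set.Countable.mono key ?_
  refine Set.countable_iUnion fun q => Set.countable_iUnion fun a => ?_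
  apply Set.Subsingleton.countable
  rintro y₁ ⟨γ₁, γ₁', h₁, h₁', hq₁, hlt₁, hgt₁⟩ y₂ ⟨γ₂, γ₂', h₂, h₂', hq₂, hlt₂, hgt₂⟩
  by_contra hne
  rcases lt_or_gt_of_ne hne with h | h
  · have := hord 1 one_pos y₁ y₂ h γ₁' γ₂ h₁' h₂ (q:ℝ) hq₁
    linarith
  · have := hord 1 one_pos y₂ y₁ h γ₂' γ₁ h₂' h₁ (q:ℝ) hq₁
    linarith
end

section
/- Let μ be a Borel measure on ℝ² finite on compacts, x₁ < x₂, and μ_{x₁,x₂}(A) = μ([x₁,x₂] × A). Then the Hausdorff dimension of supp(μ_{x₁,x₂}) (a subset of ℝ) is at most the Hausdorff dimension of supp(μ) (a subset of ℝ²). -/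
open Set MeasureTheory Metric

theorem stmt9 (μ : Measure (ℝ × ℝ)) [IsFiniteMeasureOnCompacts μ]
    (x₁ x₂ : ℝ) (hx : x₁ < x₂) :
    dimH {y : ℝ | ∀ ε : ℝ, 0 < ε → μ (Icc x₁ x₂ ×ˢ Metric.ball y ε) ≠ 0}
      ≤ dimH {p : ℝ × ℝ | ∀ ε : ℝ, 0 < ε → μ (Metric.ball p ε) ≠ 0} := by
  set T : Set (ℝ × ℝ) := {p : ℝ × ℝ | ∀ ε : ℝ, 0 < ε → μ (Metric.ball p ε) ≠ 0} with hT
  have hsub : {y : ℝ | ∀ ε : ℝ, 0 < ε → μ (Icc x₁ x₂ ×ˢ Metric.ball y ε) ≠ 0}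
      ⊆ Prod.snd '' T := by
    intro y hy
    by_contra hnot
    -- every point (x, y) with x ∈ Icc has a small null ball
    have hball : ∀ x ∈ Icc x₁ x₂, ∃ ε : ℝ, 0 < ε ∧ μ (Metric.ball (x, y) ε) = 0 := by
      intro x hxI
      by_contra h
      push_neg at h
      exact hnot ⟨(x, y), fun ε hε => h ε hε, rfl⟩
    choose! ε hεpos hε0 using hball
    have hK : IsCompact (Icc x₁ x₂ ×ˢ ({y} : Set ℝ)) :=
      isCompact_Icc.prod isCompact_singleton
    have hcov : Icc x₁ x₂ ×ˢ ({y} : Set ℝ) ⊆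
        ⋃ x ∈ Icc x₁ x₂, Metric.ball (x, y) (ε x) := by
      rintro ⟨a, b⟩ ⟨ha, hb⟩
      simp only [mem_singleton_iff] at hb
      subst hb
      exact mem_biUnion ha (Metric.mem_ball_self (hεpos a ha))
    obtain ⟨t, hts, htfin, htcov⟩ := hK.elim_finite_subcover_image
      (fun x _ => Metric.isOpen_ball) hcov
    set U : Set (ℝ × ℝ) := ⋃ x ∈ t, Metric.ball (x, y) (ε x) with hU
    have hUopen : IsOpen U := isOpen_biUnion fun x _ => Metric.isOpen_ball
    have hUnull : μ U = 0 := by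
      refine (measure_biUnion_null_iff htfin.countable).2 fun x hxt => ?_
      exact hε0 x (hts hxt)
    obtain ⟨δ, hδ, hthick⟩ := hK.exists_thickening_subset_open hUopen htcov
    have hsub2 : Icc x₁ x₂ ×ˢ Metric.ball y δ ⊆ thickening δ (Icc x₁ x₂ ×ˢ ({y} : Set ℝ)) := by
      rintro ⟨a, b⟩ ⟨ha, hb⟩
      rw [Metric.mem_thickening_iff]
      refine ⟨(a, y), ⟨ha, rfl⟩, ?_⟩
      rw [Metric.mem_ball] at hb
      rw [Prod.dist_eq, dist_self]
      exact max_lt hδ hb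
    have : μ (Icc x₁ x₂ ×ˢ Metric.ball y δ) = 0 :=
      le_antisymm (le_trans (measure_mono (hsub2.trans hthick)) hUnull.le) zero_le
    exact hy δ hδ this
  calc dimH {y : ℝ | ∀ ε : ℝ, 0 < ε → μ (Icc x₁ x₂ ×ˢ Metric.ball y ε) ≠ 0}
      ≤ dimH (Prod.snd '' T) := dimH_mono hsub
    _ ≤ dimH T := LipschitzWith.prod_snd.dimH_image_le T
end
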